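/- Let G be a finite planar weighted graph with edge weights x, and let Z_Ising(G,x) = Σ_{P ∈ E(G)_even} Π_{e∈P} x_e be the even-subgraph generating polynomial. Then the signed dimer partition function on the terminal graph G^K satisfies Σ_{D ∈ D(G^K)} (-1)^{t(D)} x^K(D) = Z_Ising(G,x), where t(D) is the number of pairs of crossing edges in D and x^K assigns weight 1 to long edges and weight (x_e x_{e'})^{1/2} to the short edge joining adjacent oriented edges e, e'. -/

import Mathlib

open scoped Classical
open Matrix

noncomputable section

variable {V F : Type*}

/-- Origin (tail) of an oriented edge `(f, b)` of the graph with endpoint map `ends`. -/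
def oTail (ends : F → V × V) (p : F × Bool) : V :=
  if p.2 then (ends p.1).1 else (ends p.1).2

/-- Head (terminal vertex) of an oriented edge. -/
def oHead (ends : F → V × V) (p : F × Bool) : V :=
  if p.2 then (ends p.1).2 else (ends p.1).1

/-- Reversal of an oriented edge. -/
def oRev (p : F × Bool) : F × Bool := (p.1, !p.2)

/-- Direction (as a complex number) of an oriented edge in the straight-line drawing
given by the vertex positions `pos`. -/
def oDir (ends : F → V × V) (pos : V → ℂ) (p : F × Bool) : ℂ :=
  pos (oHead ends p) - pos (oTail ends p)

/-- The angle (argument of the direction) of an oriented edge. -/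
def oAng (ends : F → V × V) (pos : V → ℂ) (p : F × Bool) : ℝ :=
  Complex.arg (oDir ends pos p)

/-- A dimer configuration (perfect matching) on the terminal graph `G^K`: a fixed-point
free involution of the oriented edges of `G`, matching each oriented edge either to its
reversal (a "long" dimer) or to another oriented edge with the same origin
(a "short" dimer). -/
def IsTerminalMatching (ends : F → V × V) (m : F × Bool → F × Bool) : Prop :=
  Function.Involutive m ∧ (∀ p, m p ≠ p) ∧
    ∀ p, m p = oRev p ∨ oTail ends (m p) = oTail ends p

/-- An even subgraph: a set of edges in which every vertex has even degree. -/
def IsEvenSubgraph [Fintype F] [DecidableEq V] (ends : F → V × V) (P : Finset F) :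
    Prop :=
  ∀ v : V, Even ((P.filter (fun f => (ends f).1 = v)).card +
    (P.filter (fun f => (ends f).2 = v)).card)

/-- The weight `x^K(D)` of a dimer configuration: long edges have weight `1` and the
short edge joining `e, e'` has weight `(x_e x_{e'})^{1/2}`. -/
def matchWeight [Fintype F] (x : F → ℝ) (m : F × Bool → F × Bool) : ℝ :=
  ∏ p ∈ Finset.univ.filter (fun p : F × Bool => m p ≠ oRev p), Real.sqrt (x p.1)

/-- `p` is the endpoint of a short dimer of `m` with the smaller angle. -/
def isLow (ends : F → V × V) (pos : V → ℂ) (m : F × Bool → F × Bool)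
    (p : F × Bool) : Prop :=
  m p ≠ oRev p ∧ oAng ends pos p < oAng ends pos (m p)

/-- The number `t(D)` of pairs of (short) dimers of `m` that cross in the drawing:
two chords at the same vertex cross iff their angles interleave in the cyclic order. -/
def selfCross [Fintype F] (ends : F → V × V) (pos : V → ℂ)
    (m : F × Bool → F × Bool) : ℕ :=
  (Finset.univ.filter (fun pr : (F × Bool) × (F × Bool) =>
    isLow ends pos m pr.1 ∧ isLow ends pos m pr.2 ∧
    oTail ends pr.1 = oTail ends pr.2 ∧
    oAng ends pos pr.1 < oAng ends pos pr.2 ∧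
    oAng ends pos pr.2 < oAng ends pos (m pr.1) ∧
    oAng ends pos (m pr.1) < oAng ends pos (m pr.2))).card


section Abstract
open Finset
variable {A W : Type*} [Fintype A] [DecidableEq A]


/-- Parity lemma: an involution on a finset moves an even number of elements. -/
lemma even_card_filter_ne (σ : A → A) (C : Finset A)
    (h1 : ∀ b ∈ C, σ b ∈ C) (h2 : ∀ b ∈ C, σ (σ b) = b) :
    Even ((C.filter fun b => σ b ≠ b).card) := by
  induction C using Finset.strongInduction with
  | _ C ih =>
    by_cases hfix : ∀ b ∈ C, σ b = b
    · have : C.filter (fun b => σ b ≠ b) = ∅ := by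
        apply Finset.filter_false_of_mem
        intro b hb
        simpa using hfix b hb
      simp [this]
    · push_neg at hfix
      obtain ⟨b, hb, hσb⟩ := hfix
      have hσbC : σ b ∈ C := h1 b hb
      set C' := (C.erase b).erase (σ b) with hC'
      have hsub : C' ⊂ C := by
        refine Finset.ssubset_of_subset_of_ssubset ?_ (Finset.erase_ssubset hb)
        exact Finset.erase_subset _ _
      have hC'mem : ∀ c, c ∈ C' ↔ c ∈ C ∧ c ≠ b ∧ c ≠ σ b := by
        intro c
        simp only [hC', Finset.mem_erase]
        tauto
      have h1' : ∀ c ∈ C', σ c ∈ C' := by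
        intro c hc
        rw [hC'mem] at hc ⊢
        obtain ⟨hcC, hcb, hcσb⟩ := hc
        refine ⟨h1 c hcC, ?_, ?_⟩
        · intro h; apply hcσb; rw [← h2 c hcC, h]
        · intro h
          apply hcb
          have := congrArg σ h
          rwa [h2 c hcC, h2 b hb] at this
      have h2' : ∀ c ∈ C', σ (σ c) = c := fun c hc => h2 c ((hC'mem c).mp hc).1
      have hkey : C.filter (fun c => σ c ≠ c) =
          insert b (insert (σ b) (C'.filter fun c => σ c ≠ c)) := by
        ext c
        simp only [Finset.mem_filter, Finset.mem_insert, hC'mem]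
        constructor
        · rintro ⟨hcC, hne⟩
          by_cases h1c : c = b
          · exact Or.inl h1c
          by_cases h2c : c = σ b
          · exact Or.inr (Or.inl h2c)
          · exact Or.inr (Or.inr ⟨⟨hcC, h1c, h2c⟩, hne⟩)
        · rintro (rfl | rfl | ⟨⟨hcC, _, _⟩, hne⟩)
          · exact ⟨hb, hσb⟩
          · refine ⟨hσbC, ?_⟩
            rw [h2 b hb]
            exact fun h => hσb h.symm
          · exact ⟨hcC, hne⟩
      have hb_ne : b ≠ σ b := fun h => hσb h.symm
      have hbni : b ∉ insert (σ b) (C'.filter fun c => σ c ≠ c) := by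
        simp only [Finset.mem_insert, Finset.mem_filter, hC'mem]
        push_neg
        exact ⟨hb_ne, fun h => absurd h.2.1 (not_not_intro rfl)⟩
      have hσbni : σ b ∉ (C'.filter fun c => σ c ≠ c) := by
        simp only [Finset.mem_filter, hC'mem]
        push_neg
        intro h
        exact absurd h.2.2 (not_not_intro rfl)
      rw [hkey, Finset.card_insert_of_notMem hbni, Finset.card_insert_of_notMem hσbni]
      obtain ⟨k, hk⟩ := ih C' hsub h1' h2'
      exact ⟨k + 1, by omega⟩

/-- Alternating sum over ranks. -/
lemma alt_sum_rank (αr : A → ℝ) (T : Finset A)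
    (hinj : ∀ a ∈ T, ∀ b ∈ T, αr a = αr b → a = b) :
    ∑ q ∈ T, (-1 : ℝ) ^ ((T.filter fun b => αr b < αr q).card)
      = if Even T.card then 0 else 1 := by
  induction T using Finset.strongInduction with
  | _ T ih =>
    rcases T.eq_empty_or_nonempty with rfl | hne
    · simp
    · obtain ⟨qm, hqm, hmax⟩ := T.exists_max_image αr hne
      have hinj' : ∀ a ∈ T.erase qm, ∀ b ∈ T.erase qm, αr a = αr b → a = b :=
        fun a ha b hb h => hinj a (Finset.mem_of_mem_erase ha) b (Finset.mem_of_mem_erase hb) h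
      have hstrict : ∀ b ∈ T, b ≠ qm → αr b < αr qm := by
        intro b hbT hbne
        rcases lt_or_eq_of_le (hmax b hbT) with h | h
        · exact h
        · exact absurd (hinj b hbT qm hqm h) hbne
      have hfiltqm : T.filter (fun b => αr b < αr qm) = T.erase qm := by
        ext b
        simp only [Finset.mem_filter, Finset.mem_erase]
        constructor
        · rintro ⟨hbT, hlt⟩
          exact ⟨fun h => by subst h; exact lt_irrefl _ hlt, hbT⟩
        · rintro ⟨hne', hbT⟩
          exact ⟨hbT, hstrict b hbT hne'⟩
      have hfilt : ∀ q ∈ T.erase qm,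
          T.filter (fun b => αr b < αr q) = (T.erase qm).filter (fun b => αr b < αr q) := by
        intro q hq
        ext b
        simp only [Finset.mem_filter, Finset.mem_erase]
        constructor
        · rintro ⟨hbT, hlt⟩
          refine ⟨⟨?_, hbT⟩, hlt⟩
          rintro rfl
          exact absurd (hmax q (Finset.mem_of_mem_erase hq)) (not_le.mpr hlt)
        · rintro ⟨⟨_, hbT⟩, hlt⟩
          exact ⟨hbT, hlt⟩
      rw [← Finset.add_sum_erase _ _ hqm, hfiltqm]
      have hrec := ih (T.erase qm) (Finset.erase_ssubset hqm) hinj'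
      rw [Finset.sum_congr rfl (fun q hq => by rw [hfilt q hq]), hrec,
        Finset.card_erase_of_mem hqm]
      have hcpos : 0 < T.card := Finset.card_pos.mpr hne
      have hiff : Even (T.card - 1) ↔ ¬ Even T.card := by
        rw [Nat.even_sub hcpos]
        simp [Nat.not_even_iff_odd]
      by_cases hev : Even T.card
      · rw [if_pos hev, if_neg (by rw [hiff]; exact not_not_intro hev)]
        rw [Odd.neg_one_pow (Nat.not_even_iff_odd.mp (by rw [hiff]; exact not_not_intro hev))]
        ring
      · rw [if_neg hev, if_pos (hiff.mpr hev)]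
        rw [Even.neg_one_pow (hiff.mpr hev)]
        ring


/-- The set of perfect matchings of `S` pairing points within fibers of `τ`. -/
def pmSet (τ : A → W) (S : Finset A) : Finset (A → A) :=
  univ.filter (fun m => (∀ p ∈ S, m p ∈ S ∧ m (m p) = p ∧ m p ≠ p ∧ τ (m p) = τ p) ∧
    ∀ p ∉ S, m p = p)

/-- Number of crossings of the matching `m`. -/
def crN (τ : A → W) (αr : A → ℝ) (m : A → A) : ℕ :=
  (univ.filter (fun pr : A × A =>
    (m pr.1 ≠ pr.1 ∧ αr pr.1 < αr (m pr.1)) ∧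
    (m pr.2 ≠ pr.2 ∧ αr pr.2 < αr (m pr.2)) ∧
    τ pr.1 = τ pr.2 ∧ αr pr.1 < αr pr.2 ∧ αr pr.2 < αr (m pr.1) ∧
    αr (m pr.1) < αr (m pr.2))).card

section Step

variable {τ : A → W} {αr : A → ℝ} {S : Finset A} {v : W} {p₀ q : A} {m : A → A}

theorem crN_step (hα : ∀ p q : A, τ p = τ q → αr p = αr q → p = q)
    (hp₀S : p₀ ∈ S) (hτp₀ : τ p₀ = v) (hqS : q ∈ S) (hτq : τ q = v) (hqp : q ≠ p₀)
    (hmin : ∀ b ∈ S, τ b = v → αr p₀ ≤ αr b)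
    (hm : m ∈ pmSet τ S) (hmp₀ : m p₀ = q) :
    crN τ αr m =
      (((S.erase p₀).erase q).filter fun b => τ b = v ∧ αr b < αr q ∧ αr q < αr (m b)).card
      + crN τ αr (fun r => if r = p₀ ∨ r = q then r else m r) := by
  simp only [pmSet, mem_filter, mem_univ, true_and] at hm
  obtain ⟨hS, hid⟩ := hm
  set m' : A → A := fun r => if r = p₀ ∨ r = q then r else m r with hm'def
  have hmq : m q = p₀ := by rw [← hmp₀]; exact (hS p₀ hp₀S).2.1
  have hp₀q_lt : αr p₀ < αr q := lt_of_le_of_ne (hmin q hqS hτq)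
    (fun h => hqp (hα q p₀ (by rw [hτq, hτp₀]) h.symm))
  have hm'p₀ : m' p₀ = p₀ := by simp [hm'def]
  have hm'eq : ∀ r, r ≠ p₀ → r ≠ q → m' r = m r := by
    intro r h1 h2; simp [hm'def, h1, h2]
  have hlow_to_S : ∀ r, m r ≠ r → r ∈ S := by
    intro r h; by_contra hr; exact h (hid r hr)
  have hlow'_to : ∀ r, m' r ≠ r → r ∈ S ∧ r ≠ p₀ ∧ r ≠ q ∧ m' r = m r := by
    intro r h
    have h1 : r ≠ p₀ := by rintro rfl; exact h hm'p₀
    have h2 : r ≠ q := by rintro rfl; exact h (by simp [hm'def])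
    have h3 : m' r = m r := hm'eq r h1 h2
    refine ⟨hlow_to_S r ?_, h1, h2, h3⟩
    rw [← h3]; exact h
  have himg_inj : Function.Injective (fun b : A => (p₀, b)) :=
    fun a b h => congrArg Prod.snd h
  set Bset : Finset A :=
    ((S.erase p₀).erase q).filter (fun b => τ b = v ∧ αr b < αr q ∧ αr q < αr (m b))
    with hBdef
  have hBmem : ∀ c, c ∈ Bset ↔
      (c ∈ S ∧ c ≠ p₀ ∧ c ≠ q ∧ τ c = v ∧ αr c < αr q ∧ αr q < αr (m c)) := by
    intro c
    simp only [hBdef, mem_filter, mem_erase]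
    tauto
  have hunion : (univ.filter (fun pr : A × A =>
      (m pr.1 ≠ pr.1 ∧ αr pr.1 < αr (m pr.1)) ∧
      (m pr.2 ≠ pr.2 ∧ αr pr.2 < αr (m pr.2)) ∧
      τ pr.1 = τ pr.2 ∧ αr pr.1 < αr pr.2 ∧ αr pr.2 < αr (m pr.1) ∧
      αr (m pr.1) < αr (m pr.2))) =
      (univ.filter (fun pr : A × A =>
      (m' pr.1 ≠ pr.1 ∧ αr pr.1 < αr (m' pr.1)) ∧
      (m' pr.2 ≠ pr.2 ∧ αr pr.2 < αr (m' pr.2)) ∧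
      τ pr.1 = τ pr.2 ∧ αr pr.1 < αr pr.2 ∧ αr pr.2 < αr (m' pr.1) ∧
      αr (m' pr.1) < αr (m' pr.2))) ∪ (Bset.image fun b => (p₀, b)) := by
    ext pr
    obtain ⟨a, b⟩ := pr
    simp only [mem_filter, mem_univ, true_and, mem_union, mem_image]
    constructor
    · rintro ⟨⟨hma, haa⟩, ⟨hmb, hbb⟩, hτab, h1, h2, h3⟩
      have haS : a ∈ S := hlow_to_S a hma
      have hbS : b ∈ S := hlow_to_S b hmb
      have hbq : b ≠ q := by
        rintro rfl; rw [hmq] at hbb; exact absurd hbb (not_lt.mpr hp₀q_lt.le)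
      have haq : a ≠ q := by
        rintro rfl; rw [hmq] at haa; exact absurd haa (not_lt.mpr hp₀q_lt.le)
      by_cases hap : a = p₀
      · refine Or.inr ⟨b, ?_, by rw [hap]⟩
        rw [hBmem]
        rw [hap] at h1 h2 h3 hτab
        rw [hmp₀] at h2 h3
        have hbp : b ≠ p₀ := by rintro rfl; exact absurd h1 (lt_irrefl _)
        exact ⟨hbS, hbp, hbq, by rw [← hτab, hτp₀], h2, h3⟩
      · have hbp : b ≠ p₀ := by
          rintro rfl
          have hta : τ a = v := by rw [hτab, hτp₀]
          exact absurd h1 (not_lt.mpr (hmin a haS hta))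
        have ea : m' a = m a := hm'eq a hap haq
        have eb : m' b = m b := hm'eq b hbp hbq
        rw [ea, eb]
        exact Or.inl ⟨⟨hma, haa⟩, ⟨hmb, hbb⟩, hτab, h1, h2, h3⟩
    · rintro (⟨⟨hma, haa⟩, ⟨hmb, hbb⟩, hτab, h1, h2, h3⟩ | ⟨c, hc, hpr⟩)
      · obtain ⟨haS, hap, haq, ea⟩ := hlow'_to a hma
        obtain ⟨hbS, hbp, hbq, eb⟩ := hlow'_to b hmb
        rw [ea] at hma haa h2 h3
        rw [eb] at hmb hbb h3
        exact ⟨⟨hma, haa⟩, ⟨hmb, hbb⟩, hτab, h1, h2, h3⟩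
      · rw [hBmem] at hc
        obtain ⟨hcS, hcp, hcq, hτc, hc1, hc2⟩ := hc
        injection hpr with ha' hb'
        subst ha'; subst hb'
        refine ⟨⟨by rw [hmp₀]; exact hqp, by rw [hmp₀]; exact hp₀q_lt⟩,
          ⟨(hS c hcS).2.2.1, lt_trans hc1 hc2⟩,
          by rw [hτp₀, hτc],
          lt_of_le_of_ne (hmin c hcS hτc)
            (fun h => hcp (hα c p₀ (by rw [hτc, hτp₀]) h.symm)),
          by rw [hmp₀]; exact hc1,
          by rw [hmp₀]; exact hc2⟩
  have hdisj : Disjoint (univ.filter (fun pr : A × A =>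
      (m' pr.1 ≠ pr.1 ∧ αr pr.1 < αr (m' pr.1)) ∧
      (m' pr.2 ≠ pr.2 ∧ αr pr.2 < αr (m' pr.2)) ∧
      τ pr.1 = τ pr.2 ∧ αr pr.1 < αr pr.2 ∧ αr pr.2 < αr (m' pr.1) ∧
      αr (m' pr.1) < αr (m' pr.2))) (Bset.image fun b => (p₀, b)) := by
    rw [Finset.disjoint_left]
    rintro pr hpr hpr2
    obtain ⟨c, _, hc⟩ := Finset.mem_image.mp hpr2
    obtain ⟨h1', _⟩ := (Finset.mem_filter.mp hpr).2
    apply h1'.1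
    rw [← hc] at *
    exact hm'p₀
  show crN τ αr m = Bset.card + crN τ αr m'
  rw [crN, crN, hunion, Finset.card_union_of_disjoint hdisj,
    Finset.card_image_of_injective _ himg_inj, add_comm]

end Step
section Step2

variable {τ : A → W} {αr : A → ℝ} {S : Finset A} {v : W} {p₀ q : A} {m : A → A}

theorem B_parity (hα : ∀ p q : A, τ p = τ q → αr p = αr q → p = q)
    (hp₀S : p₀ ∈ S) (hτp₀ : τ p₀ = v) (hqS : q ∈ S) (hτq : τ q = v) (hqp : q ≠ p₀)
    (hm : m ∈ pmSet τ S) (hmp₀ : m p₀ = q) :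
    ((-1 : ℝ)) ^ ((((S.erase p₀).erase q).filter
        fun b => τ b = v ∧ αr b < αr q ∧ αr q < αr (m b)).card)
      = (-1 : ℝ) ^ ((((S.erase p₀).erase q).filter fun b => τ b = v ∧ αr b < αr q).card) := by
  simp only [pmSet, mem_filter, mem_univ, true_and] at hm
  obtain ⟨hS, hid⟩ := hm
  have hmq : m q = p₀ := by rw [← hmp₀]; exact (hS p₀ hp₀S).2.1
  set S' : Finset A := (S.erase p₀).erase q with hS'def
  have hS'mem : ∀ c, c ∈ S' ↔ c ∈ S ∧ c ≠ p₀ ∧ c ≠ q := by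
    intro c; simp only [hS'def, mem_erase]; tauto
  have hS'closed : ∀ c ∈ S', m c ∈ S' := by
    intro c hc
    rw [hS'mem] at hc ⊢
    obtain ⟨hcS, hcp, hcq⟩ := hc
    refine ⟨(hS c hcS).1, ?_, ?_⟩
    · rintro h; apply hcq; rw [← (hS c hcS).2.1, h, hmp₀]
    · rintro h; apply hcp; rw [← (hS c hcS).2.1, h, hmq]
  set C : Finset A := S'.filter (fun b => τ b = v ∧ αr b < αr q) with hCdef
  have hCmem : ∀ c, c ∈ C ↔ c ∈ S' ∧ τ c = v ∧ αr c < αr q := by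
    intro c; simp only [hCdef, mem_filter]
  set σ : A → A := fun b => if αr (m b) < αr q then m b else b with hσdef
  have h1 : ∀ b ∈ C, σ b ∈ C := by
    intro b hb
    rw [hCmem] at hb
    obtain ⟨hbS', hτb, hblt⟩ := hb
    by_cases h : αr (m b) < αr q
    · have : σ b = m b := by simp [hσdef, h]
      rw [this, hCmem]
      have hbS : b ∈ S := ((hS'mem b).mp hbS').1
      exact ⟨hS'closed b hbS', by rw [(hS b hbS).2.2.2, hτb], h⟩
    · have : σ b = b := by simp [hσdef, h]
      rw [this, hCmem]
      exact ⟨hbS', hτb, hblt⟩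
  have h2 : ∀ b ∈ C, σ (σ b) = b := by
    intro b hb
    rw [hCmem] at hb
    obtain ⟨hbS', hτb, hblt⟩ := hb
    have hbS : b ∈ S := ((hS'mem b).mp hbS').1
    by_cases h : αr (m b) < αr q
    · have e1 : σ b = m b := by simp [hσdef, h]
      rw [e1]
      show (if αr (m (m b)) < αr q then m (m b) else m b) = b
      rw [(hS b hbS).2.1, if_pos hblt]
    · have e1 : σ b = b := by simp [hσdef, h]
      rw [e1, e1]
  have heven := even_card_filter_ne σ C h1 h2
  have hfilt : C.filter (fun b => σ b ≠ b) = C.filter (fun b => αr (m b) < αr q) := by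
    apply Finset.filter_congr
    intro b hb
    rw [hCmem] at hb
    have hbS : b ∈ S := ((hS'mem b).mp hb.1).1
    by_cases h : αr (m b) < αr q
    · simp only [hσdef, if_pos h]
      simp [h, (hS b hbS).2.2.1]
    · simp only [hσdef, if_neg h]
      simp [h]
  rw [hfilt] at heven
  have hneq : ∀ b ∈ C, (¬ (αr (m b) < αr q)) ↔ αr q < αr (m b) := by
    intro b hb
    rw [hCmem] at hb
    obtain ⟨hbS', hτb, _⟩ := hb
    have hbS : b ∈ S := ((hS'mem b).mp hbS').1
    have hmbS' : m b ∈ S' := hS'closed b hbS'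
    have hne : αr (m b) ≠ αr q := by
      intro h
      exact ((hS'mem (m b)).mp hmbS').2.2
        (hα (m b) q (by rw [(hS b hbS).2.2.2, hτb, hτq]) h)
    constructor
    · intro h; exact lt_of_le_of_ne (not_lt.mp h) (Ne.symm hne)
    · intro h; exact not_lt.mpr (le_of_lt h)
  have hsplit : C.card = (C.filter fun b => αr (m b) < αr q).card
      + (S'.filter (fun b => τ b = v ∧ αr b < αr q ∧ αr q < αr (m b))).card := by
    rw [← Finset.card_filter_add_card_filter_not
      (s := C) (p := fun b => αr (m b) < αr q)]
    congr 1
    congr 1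
    ext b
    simp only [mem_filter, hCdef]
    constructor
    · rintro ⟨⟨hbS', hτb, hblt⟩, hnlt⟩
      exact ⟨hbS', hτb, hblt, (hneq b (by rw [hCmem]; exact ⟨hbS', hτb, hblt⟩)).mp hnlt⟩
    · rintro ⟨hbS', hτb, hblt, hgt⟩
      exact ⟨⟨hbS', hτb, hblt⟩, (hneq b (by rw [hCmem]; exact ⟨hbS', hτb, hblt⟩)).mpr hgt⟩
  show ((-1 : ℝ)) ^ ((S'.filter fun b => τ b = v ∧ αr b < αr q ∧ αr q < αr (m b)).card)
      = (-1 : ℝ) ^ C.card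
  rw [hsplit, pow_add, Even.neg_one_pow heven, one_mul]

end Step2
lemma mem_pmSet {τ : A → W} {S : Finset A} {m : A → A} :
    m ∈ pmSet τ S ↔ ((∀ p ∈ S, m p ∈ S ∧ m (m p) = p ∧ m p ≠ p ∧ τ (m p) = τ p) ∧
      ∀ p ∉ S, m p = p) := by
  simp only [pmSet, mem_filter, mem_univ, true_and]

theorem key_sum (τ : A → W) (αr : A → ℝ)
    (hα : ∀ p q : A, τ p = τ q → αr p = αr q → p = q) :
    ∀ S : Finset A, (∀ w : W, Even ((S.filter fun p => τ p = w).card)) →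
    ∑ m ∈ pmSet τ S, (-1 : ℝ) ^ crN τ αr m = 1 := by
  intro S
  induction S using Finset.strongInduction with
  | _ S ih =>
    intro heven
    rcases S.eq_empty_or_nonempty with rfl | ⟨p, hpS⟩
    · have hpm : pmSet τ (∅ : Finset A) = {id} := by
        ext m
        rw [mem_pmSet, mem_singleton]
        constructor
        · rintro ⟨_, h2⟩
          funext r
          exact h2 r (by simp)
        · rintro rfl
          exact ⟨fun r hr => absurd hr (by simp), fun r _ => rfl⟩
      rw [hpm, Finset.sum_singleton]
      have hcr : crN τ αr (id : A → A) = 0 := by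
        rw [crN, Finset.card_eq_zero]
        apply Finset.filter_false_of_mem
        intro pr _
        simp
      rw [hcr]; norm_num
    · set v := τ p with hv
      set T := S.filter (fun b => τ b = v) with hT
      have hpT : p ∈ T := by rw [hT, mem_filter]; exact ⟨hpS, rfl⟩
      obtain ⟨p₀, hp₀T, hmin'⟩ := T.exists_min_image αr ⟨p, hpT⟩
      have hp₀S : p₀ ∈ S := (mem_filter.mp hp₀T).1
      have hτp₀ : τ p₀ = v := (mem_filter.mp hp₀T).2
      have hmin : ∀ b ∈ S, τ b = v → αr p₀ ≤ αr b :=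
        fun b hb hτb => hmin' b (mem_filter.mpr ⟨hb, hτb⟩)
      have hTinj : ∀ a ∈ T, ∀ b ∈ T, αr a = αr b → a = b := by
        intro a ha b hb h
        exact hα a b (by rw [(mem_filter.mp ha).2, (mem_filter.mp hb).2]) h
      have hmaps : ∀ m ∈ pmSet τ S, m p₀ ∈ T.erase p₀ := by
        intro m hm
        obtain ⟨hSm, _⟩ := mem_pmSet.mp hm
        rw [mem_erase, hT, mem_filter]
        exact ⟨(hSm p₀ hp₀S).2.2.1, (hSm p₀ hp₀S).1,
          by rw [(hSm p₀ hp₀S).2.2.2, hτp₀]⟩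
      rw [← Finset.sum_fiberwise_of_maps_to hmaps (fun m => (-1:ℝ) ^ crN τ αr m)]
      have hinner : ∀ q ∈ T.erase p₀,
          ∑ m ∈ (pmSet τ S).filter (fun m => m p₀ = q), (-1:ℝ) ^ crN τ αr m
          = (-1:ℝ) ^ ((((S.erase p₀).erase q).filter
              fun b => τ b = v ∧ αr b < αr q).card) := by
        intro q hq
        have hqp : q ≠ p₀ := (mem_erase.mp hq).1
        have hqT : q ∈ T := (mem_erase.mp hq).2
        have hqS : q ∈ S := (mem_filter.mp hqT).1
        have hτq : τ q = v := (mem_filter.mp hqT).2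
        have hS'mem : ∀ c, c ∈ (S.erase p₀).erase q ↔ c ∈ S ∧ c ≠ p₀ ∧ c ≠ q := by
          intro c; simp only [mem_erase]; tauto
        have hS'sub : (S.erase p₀).erase q ⊂ S := by
          refine Finset.ssubset_of_subset_of_ssubset ?_ (Finset.erase_ssubset hp₀S)
          intro c hc
          rw [hS'mem] at hc
          exact mem_erase.mpr ⟨hc.2.1, hc.1⟩
        have heven' : ∀ w, Even (((((S.erase p₀).erase q)).filter
            fun b => τ b = w).card) := by
          intro w
          by_cases hw : w = v
          · subst hw
            have he : ((S.erase p₀).erase q).filter (fun b => τ b = v)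
                = (T.erase p₀).erase q := by
              ext b
              rw [mem_filter, hS'mem, mem_erase, mem_erase, hT, mem_filter]
              tauto
            rw [he, Finset.card_erase_of_mem hq, Finset.card_erase_of_mem hp₀T]
            have h2le : 2 ≤ T.card :=
              Finset.one_lt_card.mpr ⟨p₀, hp₀T, q, hqT, Ne.symm hqp⟩
            obtain ⟨k, hk⟩ := heven v
            rw [← hT] at hk
            exact ⟨k - 1, by omega⟩
          · have he : ((S.erase p₀).erase q).filter (fun b => τ b = w)
                = S.filter (fun b => τ b = w) := by
              ext b
              rw [mem_filter, mem_filter, hS'mem]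
              constructor
              · rintro ⟨⟨h1, _, _⟩, h2⟩; exact ⟨h1, h2⟩
              · rintro ⟨h1, h2⟩
                refine ⟨⟨h1, ?_, ?_⟩, h2⟩
                · rintro rfl; exact hw (by rw [← h2, hτp₀])
                · rintro rfl; exact hw (by rw [← h2, hτq])
            rw [he]; exact heven w
        have hIH := ih ((S.erase p₀).erase q) hS'sub heven'
        -- the bijection
        have hi : ∀ m ∈ (pmSet τ S).filter (fun m => m p₀ = q),
            (fun r => if r = p₀ ∨ r = q then r else m r) ∈ pmSet τ ((S.erase p₀).erase q) := by
          intro m hm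
          obtain ⟨hmem, hmp₀⟩ := mem_filter.mp hm
          obtain ⟨hSm, hidm⟩ := mem_pmSet.mp hmem
          have hmq : m q = p₀ := by rw [← hmp₀]; exact (hSm p₀ hp₀S).2.1
          simp only [mem_pmSet]
          constructor
          · intro r hr
            rw [hS'mem] at hr
            obtain ⟨hrS, hrp, hrq⟩ := hr
            have e1 : (if r = p₀ ∨ r = q then r else m r) = m r := by
              rw [if_neg (by tauto)]
            have hmr_p : m r ≠ p₀ := by
              rintro h; apply hrq; rw [← (hSm r hrS).2.1, h, hmp₀]
            have hmr_q : m r ≠ q := by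
              rintro h; apply hrp; rw [← (hSm r hrS).2.1, h, hmq]
            rw [e1]
            have e2 : (if m r = p₀ ∨ m r = q then m r else m (m r)) = m (m r) := by
              rw [if_neg (by tauto)]
            rw [e2, (hSm r hrS).2.1]
            refine ⟨?_, rfl, (hSm r hrS).2.2.1, (hSm r hrS).2.2.2⟩
            rw [hS'mem]
            exact ⟨(hSm r hrS).1, hmr_p, hmr_q⟩
          · intro r hr
            by_cases h : r = p₀ ∨ r = q
            · rw [if_pos h]
            · rw [if_neg h]
              apply hidm
              intro hrS
              exact hr ((hS'mem r).mpr ⟨hrS, fun h1 => h (Or.inl h1),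
                fun h2 => h (Or.inr h2)⟩)
        have hj : ∀ m' ∈ pmSet τ ((S.erase p₀).erase q),
            (fun r => if r = p₀ then q else if r = q then p₀ else m' r)
              ∈ (pmSet τ S).filter (fun m => m p₀ = q) := by
          intro m' hm'
          obtain ⟨hSm', hidm'⟩ := mem_pmSet.mp hm'
          have hp₀nS' : p₀ ∉ (S.erase p₀).erase q := by rw [hS'mem]; tauto
          have hqnS' : q ∉ (S.erase p₀).erase q := by rw [hS'mem]; tauto
          simp only [mem_filter, mem_pmSet]
          have ep : (if p₀ = p₀ then q else if p₀ = q then p₀ else m' p₀) = q :=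
            if_pos rfl
          have eq' : (if q = p₀ then q else if q = q then p₀ else m' q) = p₀ := by
            rw [if_neg hqp, if_pos rfl]
          refine ⟨⟨?_, ?_⟩, by simp⟩
          · intro r hr
            by_cases h1 : r = p₀
            · rw [h1, ep, eq']
              exact ⟨hqS, rfl, hqp, by rw [hτq, hτp₀]⟩
            by_cases h2 : r = q
            · rw [h2, eq', ep]
              exact ⟨hp₀S, rfl, Ne.symm hqp, by rw [hτp₀, hτq]⟩
            · have hrS' : r ∈ (S.erase p₀).erase q := (hS'mem r).mpr ⟨hr, h1, h2⟩
              have e1 : (if r = p₀ then q else if r = q then p₀ else m' r) = m' r := by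
                rw [if_neg h1, if_neg h2]
              have hm'rS' : m' r ∈ (S.erase p₀).erase q := (hSm' r hrS').1
              have hm'rp : m' r ≠ p₀ := fun h => hp₀nS' (h ▸ hm'rS')
              have hm'rq : m' r ≠ q := fun h => hqnS' (h ▸ hm'rS')
              have e2 : (if m' r = p₀ then q else if m' r = q then p₀ else m' (m' r))
                  = m' (m' r) := by rw [if_neg hm'rp, if_neg hm'rq]
              rw [e1, e2, (hSm' r hrS').2.1]
              exact ⟨((hS'mem (m' r)).mp hm'rS').1, rfl, (hSm' r hrS').2.2.1,
                (hSm' r hrS').2.2.2⟩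
          · intro r hr
            have h1 : r ≠ p₀ := fun h => hr (h ▸ hp₀S)
            have h2 : r ≠ q := fun h => hr (h ▸ hqS)
            rw [if_neg h1, if_neg h2]
            apply hidm'
            rw [hS'mem]
            tauto
        have hji : ∀ m ∈ (pmSet τ S).filter (fun m => m p₀ = q),
            (fun r => if r = p₀ then q else if r = q then p₀ else
              (if r = p₀ ∨ r = q then r else m r)) = m := by
          intro m hm
          obtain ⟨hmem, hmp₀⟩ := mem_filter.mp hm
          obtain ⟨hSm, _⟩ := mem_pmSet.mp hmem
          have hmq : m q = p₀ := by rw [← hmp₀]; exact (hSm p₀ hp₀S).2.1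
          funext r
          by_cases h1 : r = p₀
          · rw [h1, if_pos rfl, hmp₀]
          by_cases h2 : r = q
          · rw [h2, if_neg hqp, if_pos rfl, hmq]
          · show (if r = p₀ then q else if r = q then p₀ else
              (if r = p₀ ∨ r = q then r else m r)) = m r
            rw [if_neg h1, if_neg h2, if_neg (by tauto : ¬(r = p₀ ∨ r = q))]
        have hij : ∀ m' ∈ pmSet τ ((S.erase p₀).erase q),
            (fun r => if r = p₀ ∨ r = q then r else
              (if r = p₀ then q else if r = q then p₀ else m' r)) = m' := by
          intro m' hm'
          obtain ⟨hSm', hidm'⟩ := mem_pmSet.mp hm'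
          have hp₀nS' : p₀ ∉ (S.erase p₀).erase q := by rw [hS'mem]; tauto
          have hqnS' : q ∉ (S.erase p₀).erase q := by rw [hS'mem]; tauto
          funext r
          by_cases h : r = p₀ ∨ r = q
          · show (if r = p₀ ∨ r = q then r else _) = m' r
            rw [if_pos h]
            rcases h with h | h
            · rw [h]; exact (hidm' p₀ hp₀nS').symm
            · rw [h]; exact (hidm' q hqnS').symm
          · show (if r = p₀ ∨ r = q then r else
              (if r = p₀ then q else if r = q then p₀ else m' r)) = m' r
            rw [if_neg h, if_neg (fun h1 => h (Or.inl h1)),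
              if_neg (fun h2 => h (Or.inr h2))]
        have hfg : ∀ m ∈ (pmSet τ S).filter (fun m => m p₀ = q),
            (-1:ℝ) ^ crN τ αr m
            = (-1:ℝ) ^ ((((S.erase p₀).erase q).filter
                fun b => τ b = v ∧ αr b < αr q).card)
              * (-1:ℝ) ^ crN τ αr (fun r => if r = p₀ ∨ r = q then r else m r) := by
          intro m hm
          obtain ⟨hmem, hmp₀⟩ := mem_filter.mp hm
          have h1 := crN_step hα hp₀S hτp₀ hqS hτq hqp hmin hmem hmp₀
          have h2 := B_parity (αr := αr) hα hp₀S hτp₀ hqS hτq hqp hmem hmp₀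
          rw [h1, pow_add, h2]
        have hstep : ∑ m ∈ (pmSet τ S).filter (fun m => m p₀ = q),
            (-1:ℝ) ^ crN τ αr m
            = ∑ m' ∈ pmSet τ ((S.erase p₀).erase q),
              (-1:ℝ) ^ ((((S.erase p₀).erase q).filter
                fun b => τ b = v ∧ αr b < αr q).card) * (-1:ℝ) ^ crN τ αr m' :=
          Finset.sum_nbij' _ _ hi hj hji hij hfg
        rw [hstep, ← Finset.mul_sum, hIH, mul_one]
      rw [Finset.sum_congr rfl hinner]
      -- final alternating sum
      have hCqcard : ∀ q ∈ T.erase p₀,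
          (((S.erase p₀).erase q).filter fun b => τ b = v ∧ αr b < αr q).card + 1
            = (T.filter fun b => αr b < αr q).card := by
        intro q hq
        have hqp : q ≠ p₀ := (mem_erase.mp hq).1
        have hqT : q ∈ T := (mem_erase.mp hq).2
        have hp₀q_lt : αr p₀ < αr q := lt_of_le_of_ne (hmin' q hqT)
          (fun h => hqp (hTinj q hqT p₀ hp₀T h.symm))
        have he : ((S.erase p₀).erase q).filter (fun b => τ b = v ∧ αr b < αr q)
            = (T.filter fun b => αr b < αr q).erase p₀ := by
          ext b
          simp only [mem_filter, mem_erase, hT]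
          constructor
          · rintro ⟨⟨hbq, hbp, hbS⟩, hτb, hlt⟩
            exact ⟨hbp, ⟨hbS, hτb⟩, hlt⟩
          · rintro ⟨hbp, ⟨hbS, hτb⟩, hlt⟩
            exact ⟨⟨fun h => absurd (h ▸ hlt) (lt_irrefl _), hbp, hbS⟩, hτb, hlt⟩
        have hp₀mem : p₀ ∈ T.filter (fun b => αr b < αr q) :=
          mem_filter.mpr ⟨hp₀T, hp₀q_lt⟩
        rw [he, Finset.card_erase_of_mem hp₀mem]
        have : 1 ≤ (T.filter fun b => αr b < αr q).card :=
          Finset.card_pos.mpr ⟨p₀, hp₀mem⟩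
        omega
      have hsum0 : ∑ q ∈ T, (-1:ℝ) ^ ((T.filter fun b => αr b < αr q).card) = 0 := by
        rw [alt_sum_rank αr T hTinj, if_pos (by rw [hT] at *; exact heven v)]
      have hp₀0 : (T.filter fun b => αr b < αr p₀) = ∅ := by
        apply Finset.filter_false_of_mem
        intro b hb
        exact not_lt.mpr (hmin' b hb)
      have hstep2 : ∀ q ∈ T.erase p₀,
          (-1:ℝ) ^ ((((S.erase p₀).erase q).filter fun b => τ b = v ∧ αr b < αr q).card)
          = -(-1:ℝ) ^ ((T.filter fun b => αr b < αr q).card) := by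
        intro q hq
        rw [← hCqcard q hq, pow_succ]
        ring
      rw [Finset.sum_congr rfl hstep2, Finset.sum_neg_distrib]
      have hsplit := Finset.add_sum_erase T
        (fun q => (-1:ℝ) ^ ((T.filter fun b => αr b < αr q).card)) hp₀T
      rw [hsum0] at hsplit
      simp only [hp₀0, Finset.card_empty, pow_zero] at hsplit
      linarith
end Abstract

section Geometry

variable (ends : F → V × V) (pos : V → ℂ)

lemma oRev_oRev (p : F × Bool) : oRev (oRev p) = p := by
  rcases p with ⟨f, b⟩
  simp [oRev]

lemma oRev_ne (p : F × Bool) : oRev p ≠ p := by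
  rcases p with ⟨f, b⟩
  simp [oRev]

lemma oTail_rev_ne (hloop : ∀ f : F, (ends f).1 ≠ (ends f).2) (p : F × Bool) :
    oTail ends (oRev p) ≠ oTail ends p := by
  rcases p with ⟨f, b⟩
  cases b
  · simpa [oTail, oRev] using (hloop f)
  · simpa [oTail, oRev] using (hloop f).symm

lemma head_ne_tail (hloop : ∀ f : F, (ends f).1 ≠ (ends f).2) (p : F × Bool) :
    oHead ends p ≠ oTail ends p := by
  rcases p with ⟨f, b⟩
  cases b
  · simpa [oHead, oTail] using hloop f
  · simpa [oHead, oTail] using (hloop f).symm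

lemma oDir_ne_zero (hinj : Function.Injective pos)
    (hloop : ∀ f : F, (ends f).1 ≠ (ends f).2) (p : F × Bool) :
    oDir ends pos p ≠ 0 := by
  rw [oDir, sub_ne_zero]
  exact fun h => head_ne_tail ends hloop p (hinj h)

lemma mem_seg (p : F × Bool) {t : ℝ} (h0 : 0 < t) (h1 : t < 1) :
    pos (oTail ends p) + t • oDir ends pos p
      ∈ openSegment ℝ (pos (ends p.1).1) (pos (ends p.1).2) := by
  rcases p with ⟨f, b⟩
  rw [openSegment_eq_image]
  cases b
  · refine ⟨1 - t, ⟨by linarith, by linarith⟩, ?_⟩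
    simp only [oDir, oHead, oTail, Bool.cond_false, if_false]
    simp only [Complex.real_smul]
    push_cast
    ring
  · refine ⟨t, ⟨h0, h1⟩, ?_⟩
    simp only [oDir, oHead, oTail, if_true]
    simp only [Complex.real_smul]
    push_cast
    ring

lemma ang_inj (hinj : Function.Injective pos)
    (hloop : ∀ f : F, (ends f).1 ≠ (ends f).2)
    (hplanar : ∀ f g : F, f ≠ g → ∀ z : ℂ,
      z ∈ openSegment ℝ (pos (ends f).1) (pos (ends f).2) →
      z ∈ openSegment ℝ (pos (ends g).1) (pos (ends g).2) → False) :
    ∀ p q : F × Bool, oTail ends p = oTail ends q →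
      oAng ends pos p = oAng ends pos q → p = q := by
  intro p q htail hang
  by_cases hfq : p.1 = q.1
  · rcases p with ⟨f, b⟩
    rcases q with ⟨g, c⟩
    simp only at hfq
    subst hfq
    by_cases hbc : b = c
    · rw [hbc]
    · exfalso
      cases b <;> cases c <;> simp only [oTail] at htail <;>
        first
          | exact hbc rfl
          | exact hloop f htail.symm
          | exact hloop f htail
  · exfalso
    have hz := oDir_ne_zero ends pos hinj hloop p
    have hw := oDir_ne_zero ends pos hinj hloop q
    have hray : SameRay ℝ (oDir ends pos p) (oDir ends pos q) :=
      Complex.sameRay_iff.mpr (Or.inr (Or.inr hang))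
    obtain ⟨r, s, hr, hs, hrs⟩ := hray.exists_pos hz hw
    set u : ℝ := min 1 (r / s) with hu
    have hu0 : 0 < u := lt_min one_pos (div_pos hr hs)
    have hu1 : u ≤ 1 := min_le_left _ _
    have hu2 : u ≤ r / s := min_le_right _ _
    have ht'1 : u / 2 * s / r < 1 := by
      rw [div_lt_one hr]
      have h2 : u * s ≤ (r / s) * s := mul_le_mul_of_nonneg_right hu2 hs.le
      have h3 : (r / s) * s = r := div_mul_cancel₀ r (ne_of_gt hs)
      nlinarith
    have hc1 := mem_seg ends pos p (t := u / 2) (by positivity) (by linarith)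
    have hc2 := mem_seg ends pos q (t := u / 2 * s / r) (by positivity) ht'1
    have hpt : pos (oTail ends p) + (u / 2) • oDir ends pos p
        = pos (oTail ends q) + (u / 2 * s / r) • oDir ends pos q := by
      rw [htail]
      congr 1
      have hmul : (u / 2 / r) • (r • oDir ends pos p)
          = (u / 2 / r) • (s • oDir ends pos q) := by rw [hrs]
      rw [smul_smul, smul_smul] at hmul
      have e1 : u / 2 / r * r = u / 2 := div_mul_cancel₀ _ (ne_of_gt hr)
      have e2 : u / 2 / r * s = u / 2 * s / r := by ring
      rwa [e1, e2] at hmul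
    rw [hpt] at hc1
    exact hplanar p.1 q.1 hfq _ hc1 hc2

end Geometry

section FiberCard

variable [DecidableEq V] [Fintype F] [DecidableEq F] (ends : F → V × V)

lemma fiber_card (P : Finset F) (v : V) :
    (Finset.univ.filter fun p : F × Bool => p.1 ∈ P ∧ oTail ends p = v).card
      = (P.filter fun f => (ends f).1 = v).card
        + (P.filter fun f => (ends f).2 = v).card := by
  have hset : Finset.univ.filter (fun p : F × Bool => p.1 ∈ P ∧ oTail ends p = v)
      = ((P.filter fun f => (ends f).1 = v).image (fun f => (f, true)))
        ∪ ((P.filter fun f => (ends f).2 = v).image (fun f => (f, false))) := by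
    ext ⟨f, b⟩
    cases b <;>
      simp only [Finset.mem_filter, Finset.mem_univ, true_and] <;>
      simp [oTail, Finset.mem_union, Finset.mem_image, Finset.mem_filter]
  have hinj1 : Function.Injective (fun f : F => (f, true)) :=
    fun a b h => congrArg Prod.fst h
  have hinj2 : Function.Injective (fun f : F => (f, false)) :=
    fun a b h => congrArg Prod.fst h
  have hdisj : Disjoint
      ((P.filter fun f => (ends f).1 = v).image (fun f => (f, true)))
      ((P.filter fun f => (ends f).2 = v).image (fun f => (f, false))) := by
    rw [Finset.disjoint_left]
    rintro ⟨f, b⟩ h1 h2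
    obtain ⟨a, _, ha⟩ := Finset.mem_image.mp h1
    obtain ⟨a', _, ha'⟩ := Finset.mem_image.mp h2
    have hb1 : true = b := congrArg Prod.snd ha
    have hb2 : false = b := congrArg Prod.snd ha'
    exact absurd (hb1.trans hb2.symm) (by simp)
  rw [hset, Finset.card_union_of_disjoint hdisj,
    Finset.card_image_of_injective _ hinj1, Finset.card_image_of_injective _ hinj2]

end FiberCard

/-- For a finite planar weighted graph `(G,x)` (drawn with straight
edges, no loops, no crossings), the signed dimer partition function on the terminal
graph `G^K` equals the even-subgraph generating polynomial:
`Σ_{D ∈ D(G^K)} (-1)^{t(D)} x^K(D) = Z_Ising(G,x) = Σ_{P even} Π_{e∈P} x_e`. -/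
theorem statement8 [Fintype V] [DecidableEq V] [Fintype F] [DecidableEq F]
    (ends : F → V × V) (pos : V → ℂ) (x : F → ℝ)
    (hx : ∀ f, 0 ≤ x f)
    (hinj : Function.Injective pos)
    (hloop : ∀ f : F, (ends f).1 ≠ (ends f).2)
    (hplanar : ∀ f g : F, f ≠ g → ∀ z : ℂ,
      z ∈ openSegment ℝ (pos (ends f).1) (pos (ends f).2) →
      z ∈ openSegment ℝ (pos (ends g).1) (pos (ends g).2) → False)
    (hvert : ∀ (f : F) (v : V),
      pos v ∉ openSegment ℝ (pos (ends f).1) (pos (ends f).2)) :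
    ∑ m ∈ Finset.univ.filter
        (fun m : F × Bool → F × Bool => IsTerminalMatching ends m),
      (-1 : ℝ) ^ (selfCross ends pos m) * matchWeight x m
    = ∑ P ∈ Finset.univ.filter (fun P : Finset F => IsEvenSubgraph ends P),
        ∏ f ∈ P, x f := by
  have hα := ang_inj ends pos hinj hloop hplanar
  have hflip : ∀ m : F × Bool → F × Bool, IsTerminalMatching ends m → ∀ f : F,
      (m (f, true) = oRev (f, true) ↔ m (f, false) = oRev (f, false)) := by
    intro m hm f
    constructor
    · intro h
      have h2 := hm.1 (f, true)
      rw [h] at h2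
      exact h2
    · intro h
      have h2 := hm.1 (f, false)
      rw [h] at h2
      exact h2
  have hmemP : ∀ m : F × Bool → F × Bool, IsTerminalMatching ends m →
      ∀ p : F × Bool, (m p ≠ oRev p ↔
        p.1 ∈ Finset.univ.filter (fun f => m (f, true) ≠ oRev (f, true))) := by
    intro m hm p
    have hiff := hflip m hm
    rcases p with ⟨f, b⟩
    rw [Finset.mem_filter]
    simp only [Finset.mem_univ, true_and]
    cases b
    · exact not_iff_not.mpr (hiff f).symm
    · exact Iff.rfl
  have hmS : ∀ (m : F × Bool → F × Bool), IsTerminalMatching ends m →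
      ∀ p, m p ≠ oRev p →
        (m (m p) ≠ oRev (m p) ∧ oTail ends (m p) = oTail ends p) := by
    intro m hm p hp
    constructor
    · intro h
      have h3 : p = oRev (m p) := (hm.1 p).symm.trans h
      have h4 := congrArg oRev h3
      rw [oRev_oRev] at h4
      exact hp h4.symm
    · rcases hm.2.2 p with h | h
      · exact absurd h hp
      · exact h
  have hevenP : ∀ m : F × Bool → F × Bool, IsTerminalMatching ends m →
      IsEvenSubgraph ends
        (Finset.univ.filter (fun f => m (f, true) ≠ oRev (f, true))) := by
    intro m hm v
    rw [← fiber_card ends _ v]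
    have hsetv : Finset.univ.filter (fun p : F × Bool =>
        p.1 ∈ Finset.univ.filter (fun f => m (f, true) ≠ oRev (f, true))
          ∧ oTail ends p = v)
        = Finset.univ.filter
          (fun p : F × Bool => m p ≠ oRev p ∧ oTail ends p = v) := by
      apply Finset.filter_congr
      intro p _
      rw [← hmemP m hm p]
    rw [hsetv]
    have h1 : ∀ b ∈ Finset.univ.filter
        (fun p : F × Bool => m p ≠ oRev p ∧ oTail ends p = v),
        m b ∈ Finset.univ.filter
          (fun p : F × Bool => m p ≠ oRev p ∧ oTail ends p = v) := by
      intro b hb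
      rw [Finset.mem_filter] at hb ⊢
      obtain ⟨-, hb1, hb2⟩ := hb
      exact ⟨Finset.mem_univ _, (hmS m hm b hb1).1, by rw [(hmS m hm b hb1).2, hb2]⟩
    have h2 : ∀ b ∈ Finset.univ.filter
        (fun p : F × Bool => m p ≠ oRev p ∧ oTail ends p = v), m (m b) = b :=
      fun b _ => hm.1 b
    have := even_card_filter_ne m _ h1 h2
    rwa [Finset.filter_true_of_mem (fun b _ => hm.2.1 b)] at this
  have hwt : ∀ m : F × Bool → F × Bool, IsTerminalMatching ends m →
      matchWeight x m
        = ∏ f ∈ Finset.univ.filter (fun f => m (f, true) ≠ oRev (f, true)), x f := by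
    intro m hm
    rw [matchWeight, Finset.prod_filter, Finset.prod_filter,
      ← Finset.univ_product_univ, Finset.prod_product]
    refine Finset.prod_congr rfl ?_
    intro f _
    rw [Fintype.prod_bool]
    by_cases hf : m (f, true) = oRev (f, true)
    · have hf2 : m (f, false) = oRev (f, false) := (hflip m hm f).mp hf
      rw [if_neg (not_not_intro hf), if_neg (not_not_intro hf2),
        if_neg (not_not_intro hf)]
      norm_num
    · have hf2 : m (f, false) ≠ oRev (f, false) := fun h => hf ((hflip m hm f).mpr h)
      rw [if_pos hf, if_pos hf2, if_pos hf]
      exact Real.mul_self_sqrt (hx f)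
  have hmapsP : ∀ m ∈ Finset.univ.filter
      (fun m : F × Bool → F × Bool => IsTerminalMatching ends m),
      (Finset.univ.filter (fun f => m (f, true) ≠ oRev (f, true)))
        ∈ Finset.univ.filter (fun P : Finset F => IsEvenSubgraph ends P) := by
    intro m hm
    rw [Finset.mem_filter] at hm ⊢
    exact ⟨Finset.mem_univ _, hevenP m hm.2⟩
  rw [← Finset.sum_fiberwise_of_maps_to hmapsP
    (fun m => (-1 : ℝ) ^ (selfCross ends pos m) * matchWeight x m)]
  refine Finset.sum_congr rfl ?_
  intro P hP
  have hPeven : IsEvenSubgraph ends P := (Finset.mem_filter.mp hP).2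
  show ∑ m ∈ (Finset.univ.filter (fun m : F × Bool → F × Bool =>
        IsTerminalMatching ends m)).filter
        (fun m => Finset.univ.filter (fun f => m (f, true) ≠ oRev (f, true)) = P),
      (-1 : ℝ) ^ (selfCross ends pos m) * matchWeight x m = ∏ f ∈ P, x f
  have hkey : ∑ m' ∈ pmSet (oTail ends)
      (Finset.univ.filter (fun p : F × Bool => p.1 ∈ P)),
      (-1 : ℝ) ^ (crN (oTail ends) (oAng ends pos) m') = 1 := by
    refine key_sum (oTail ends) (oAng ends pos) hα
      (Finset.univ.filter (fun p : F × Bool => p.1 ∈ P)) ?_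
    intro w
    have h := hPeven w
    rw [← fiber_card ends P w] at h
    obtain ⟨k, hk⟩ := h
    refine ⟨k, ?_⟩
    rw [← hk]
    apply Finset.card_bij (fun pr _ => pr)
    · intro a ha
      simp only [Finset.mem_filter, Finset.mem_univ, true_and] at ha ⊢
      exact ha
    · intro a _ b _ hab
      exact hab
    · intro b hb
      simp only [Finset.mem_filter, Finset.mem_univ, true_and] at hb
      refine ⟨b, ?_, rfl⟩
      simp only [Finset.mem_filter, Finset.mem_univ, true_and]
      exact hb
  have hbij : ∑ m ∈ (Finset.univ.filter (fun m : F × Bool → F × Bool =>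
        IsTerminalMatching ends m)).filter
        (fun m => Finset.univ.filter (fun f => m (f, true) ≠ oRev (f, true)) = P),
      (-1 : ℝ) ^ (selfCross ends pos m)
      = ∑ m' ∈ pmSet (oTail ends)
          (Finset.univ.filter (fun p : F × Bool => p.1 ∈ P)),
        (-1 : ℝ) ^ (crN (oTail ends) (oAng ends pos) m') := by
    refine Finset.sum_nbij'
      (i := fun m (p : F × Bool) => if p.1 ∈ P then m p else p)
      (j := fun m' (p : F × Bool) => if p.1 ∈ P then m' p else oRev p)
      ?_ ?_ ?_ ?_ ?_
    · intro m hm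
      rw [Finset.mem_filter, Finset.mem_filter] at hm
      obtain ⟨⟨-, hitm⟩, hPmP⟩ := hm
      have hmP : ∀ p : F × Bool, (m p ≠ oRev p ↔ p.1 ∈ P) := by
        intro p; rw [hmemP m hitm p, hPmP]
      simp only [mem_pmSet]
      constructor
      · intro r hr
        rw [Finset.mem_filter] at hr
        have hrP : r.1 ∈ P := hr.2
        have hmr : m r ≠ oRev r := (hmP r).mpr hrP
        have hmrP : (m r).1 ∈ P := (hmP (m r)).mp (hmS m hitm r hmr).1
        rw [if_pos hrP, if_pos hmrP, hitm.1 r]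
        refine ⟨?_, rfl, hitm.2.1 r, (hmS m hitm r hmr).2⟩
        rw [Finset.mem_filter]
        exact ⟨Finset.mem_univ _, hmrP⟩
      · intro r hr
        rw [Finset.mem_filter] at hr
        have hrP : r.1 ∉ P := fun h => hr ⟨Finset.mem_univ _, h⟩
        rw [if_neg hrP]
    · intro m' hm'
      obtain ⟨hSm', hidm'⟩ := mem_pmSet.mp hm'
      have hmem' : ∀ p : F × Bool, p.1 ∈ P →
          (m' p).1 ∈ P ∧ m' (m' p) = p ∧ m' p ≠ p
            ∧ oTail ends (m' p) = oTail ends p := by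
        intro p hp
        have h := hSm' p (by rw [Finset.mem_filter]; exact ⟨Finset.mem_univ _, hp⟩)
        exact ⟨(Finset.mem_filter.mp h.1).2, h.2.1, h.2.2.1, h.2.2.2⟩
      rw [Finset.mem_filter, Finset.mem_filter]
      refine ⟨⟨Finset.mem_univ _, ?_, ?_, ?_⟩, ?_⟩
      · intro p
        by_cases hp : p.1 ∈ P
        · have h1 : (m' p).1 ∈ P := (hmem' p hp).1
          show (if (if p.1 ∈ P then m' p else oRev p).1 ∈ P then
            m' (if p.1 ∈ P then m' p else oRev p)
            else oRev (if p.1 ∈ P then m' p else oRev p)) = p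
          rw [if_pos hp, if_pos h1]
          exact (hmem' p hp).2.1
        · show (if (if p.1 ∈ P then m' p else oRev p).1 ∈ P then
            m' (if p.1 ∈ P then m' p else oRev p)
            else oRev (if p.1 ∈ P then m' p else oRev p)) = p
          rw [if_neg hp, if_neg (show (oRev p).1 ∉ P from hp)]
          exact oRev_oRev p
      · intro p
        by_cases hp : p.1 ∈ P
        · show (if p.1 ∈ P then m' p else oRev p) ≠ p
          rw [if_pos hp]; exact (hmem' p hp).2.2.1
        · show (if p.1 ∈ P then m' p else oRev p) ≠ p
          rw [if_neg hp]; exact oRev_ne p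
      · intro p
        by_cases hp : p.1 ∈ P
        · show (if p.1 ∈ P then m' p else oRev p) = oRev p
            ∨ oTail ends (if p.1 ∈ P then m' p else oRev p) = oTail ends p
          rw [if_pos hp]
          exact Or.inr (hmem' p hp).2.2.2
        · show (if p.1 ∈ P then m' p else oRev p) = oRev p
            ∨ oTail ends (if p.1 ∈ P then m' p else oRev p) = oTail ends p
          rw [if_neg hp]
          exact Or.inl rfl
      · ext f
        rw [Finset.mem_filter]
        simp only [Finset.mem_univ, true_and]
        by_cases hf : f ∈ P
        · show (if ((f, true) : F × Bool).1 ∈ P then m' (f, true)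
            else oRev (f, true)) ≠ oRev (f, true) ↔ f ∈ P
          rw [if_pos (show ((f, true) : F × Bool).1 ∈ P from hf)]
          simp only [hf, iff_true]
          intro h
          have htl := (hmem' (f, true) hf).2.2.2
          rw [h] at htl
          exact oTail_rev_ne ends hloop (f, true) htl
        · show (if ((f, true) : F × Bool).1 ∈ P then m' (f, true)
            else oRev (f, true)) ≠ oRev (f, true) ↔ f ∈ P
          rw [if_neg (show ((f, true) : F × Bool).1 ∉ P from hf)]
          simp [hf]
    · intro m hm
      rw [Finset.mem_filter, Finset.mem_filter] at hm
      obtain ⟨⟨-, hitm⟩, hPmP⟩ := hm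
      have hmP : ∀ p : F × Bool, (m p ≠ oRev p ↔ p.1 ∈ P) := by
        intro p; rw [hmemP m hitm p, hPmP]
      funext p
      show (if p.1 ∈ P then (if p.1 ∈ P then m p else p) else oRev p) = m p
      by_cases hp : p.1 ∈ P
      · rw [if_pos hp, if_pos hp]
      · rw [if_neg hp]
        by_contra hne
        exact hp ((hmP p).mp (fun h => hne h.symm))
    · intro m' hm'
      obtain ⟨hSm', hidm'⟩ := mem_pmSet.mp hm'
      funext p
      show (if p.1 ∈ P then (if p.1 ∈ P then m' p else oRev p) else p) = m' p
      by_cases hp : p.1 ∈ P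
      · rw [if_pos hp, if_pos hp]
      · rw [if_neg hp]
        exact (hidm' p (fun h => hp (Finset.mem_filter.mp h).2)).symm
    · intro m hm
      rw [Finset.mem_filter, Finset.mem_filter] at hm
      obtain ⟨⟨-, hitm⟩, hPmP⟩ := hm
      have hmP : ∀ p : F × Bool, (m p ≠ oRev p ↔ p.1 ∈ P) := by
        intro p; rw [hmemP m hitm p, hPmP]
      have hiffc : ∀ pr : (F × Bool) × (F × Bool),
          (isLow ends pos m pr.1 ∧ isLow ends pos m pr.2 ∧
            oTail ends pr.1 = oTail ends pr.2 ∧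
            oAng ends pos pr.1 < oAng ends pos pr.2 ∧
            oAng ends pos pr.2 < oAng ends pos (m pr.1) ∧
            oAng ends pos (m pr.1) < oAng ends pos (m pr.2))
          ↔ (((if pr.1.1 ∈ P then m pr.1 else pr.1) ≠ pr.1 ∧
              oAng ends pos pr.1 <
                oAng ends pos (if pr.1.1 ∈ P then m pr.1 else pr.1)) ∧
             ((if pr.2.1 ∈ P then m pr.2 else pr.2) ≠ pr.2 ∧
              oAng ends pos pr.2 <
                oAng ends pos (if pr.2.1 ∈ P then m pr.2 else pr.2)) ∧
            oTail ends pr.1 = oTail ends pr.2 ∧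
            oAng ends pos pr.1 < oAng ends pos pr.2 ∧
            oAng ends pos pr.2 <
              oAng ends pos (if pr.1.1 ∈ P then m pr.1 else pr.1) ∧
            oAng ends pos (if pr.1.1 ∈ P then m pr.1 else pr.1) <
              oAng ends pos (if pr.2.1 ∈ P then m pr.2 else pr.2)) := by
        intro pr
        simp only [isLow]
        constructor
        · rintro ⟨⟨hl1, hl1'⟩, ⟨hl2, hl2'⟩, h3, h4, h5, h6⟩
          have h1P : pr.1.1 ∈ P := (hmP pr.1).mp hl1
          have h2P : pr.2.1 ∈ P := (hmP pr.2).mp hl2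
          rw [if_pos h1P, if_pos h2P]
          exact ⟨⟨hitm.2.1 pr.1, hl1'⟩, ⟨hitm.2.1 pr.2, hl2'⟩, h3, h4, h5, h6⟩
        · rintro ⟨⟨ha1, ha2⟩, ⟨hb1, hb2⟩, h3, h4, h5, h6⟩
          by_cases h1P : pr.1.1 ∈ P
          · by_cases h2P : pr.2.1 ∈ P
            · rw [if_pos h1P] at ha2 h5 h6
              rw [if_pos h2P] at hb2 h6
              exact ⟨⟨(hmP pr.1).mpr h1P, ha2⟩, ⟨(hmP pr.2).mpr h2P, hb2⟩,
                h3, h4, h5, h6⟩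
            · rw [if_neg h2P] at hb1
              exact absurd rfl hb1
          · rw [if_neg h1P] at ha1
            exact absurd rfl ha1
      congr 1
      rw [selfCross, crN]
      apply Finset.card_bij (fun pr _ => pr)
      · intro pr hpr
        simp only [Finset.mem_filter, Finset.mem_univ, true_and] at hpr ⊢
        exact (hiffc pr).mp hpr
      · intro a _ b _ hab
        exact hab
      · intro pr hpr
        simp only [Finset.mem_filter, Finset.mem_univ, true_and] at hpr
        refine ⟨pr, ?_, rfl⟩
        simp only [Finset.mem_filter, Finset.mem_univ, true_and]
        exact (hiffc pr).mpr hpr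
  have hconst : ∀ m ∈ (Finset.univ.filter (fun m : F × Bool → F × Bool =>
        IsTerminalMatching ends m)).filter
        (fun m => Finset.univ.filter (fun f => m (f, true) ≠ oRev (f, true)) = P),
      (-1 : ℝ) ^ (selfCross ends pos m) * matchWeight x m
        = (-1 : ℝ) ^ (selfCross ends pos m) * ∏ f ∈ P, x f := by
    intro m hm
    rw [Finset.mem_filter, Finset.mem_filter] at hm
    obtain ⟨⟨-, hitm⟩, hPmP⟩ := hm
    rw [hwt m hitm, hPmP]
  rw [Finset.sum_congr rfl hconst, ← Finset.sum_mul, hbij, hkey, one_mul]
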